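/- The only irreducible λ-quiddities over ℕ (viewed as the subset of nonnegative integers in ℤ) are (1,1,1) and (0,0,0,0). -/

import Mathlib

/-- The matrix `[[a, -1], [1, 0]]`. -/
def mMat {A : Type*} [CommRing A] (a : A) : Matrix (Fin 2) (Fin 2) A := !![a, -1; 1, 0]

/-- `M_n(a₁, …, aₙ) = mMat aₙ * ⋯ * mMat a₁`, for the tuple given as a list `[a₁, …, aₙ]`. -/
def mProd {A : Type*} [CommRing A] (l : List A) : Matrix (Fin 2) (Fin 2) A :=
  ((l.map mMat).reverse).prod

/-- The sum `(a₁,…,aₙ) ⊕ (b₁,…,b_m) = (a₁+b_m, a₂,…,a_{n−1}, aₙ+b₁, b₂,…,b_{m−1})`. -/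
def oplus {A : Type*} [CommRing A] (a b : List A) : List A :=
  (a.headD 0 + b.getLastD 0) ::
    (a.dropLast.tail ++ (a.getLastD 0 + b.headD 0) :: b.dropLast.tail)

/-- Two tuples are equivalent if one is a cyclic rotation of the other or of its reversal. -/
def TupEquiv {A : Type*} (a b : List A) : Prop :=
  (∃ k, b = a.rotate k) ∨ (∃ k, b = a.reverse.rotate k)

/-- A λ-quiddity over `R ⊆ A`: all entries lie in `R` and `M_n(a₁,…,aₙ) = ± Id`. -/
def IsQuiddity {A : Type*} [CommRing A] (R : Set A) (c : List A) : Prop :=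
  (∀ x ∈ c, x ∈ R) ∧ (mProd c = 1 ∨ mProd c = -1)

/-- A λ-quiddity `c` over `R` is reducible if `c ∼ a ⊕ b` with `a ∈ R^m`, `m ≥ 3`,
and `b` a λ-quiddity over `R` of size `l ≥ 3`. -/
def IsReducible {A : Type*} [CommRing A] (R : Set A) (c : List A) : Prop :=
  ∃ a b : List A, 3 ≤ a.length ∧ 3 ≤ b.length ∧ (∀ x ∈ a, x ∈ R) ∧
    IsQuiddity R b ∧ TupEquiv c (oplus a b)

/-- An irreducible λ-quiddity over `R`: a λ-quiddity of size `≥ 3` which is not reducible. -/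
def IrreducibleQuiddity {A : Type*} [CommRing A] (R : Set A) (c : List A) : Prop :=
  IsQuiddity R c ∧ 3 ≤ c.length ∧ ¬ IsReducible R c

/-- The continuant `K_i(a₁,…,a_i)`, determinant of the tridiagonal matrix with diagonal
`a₁,…,a_i` and off-diagonal entries `1`; `K₀ = 1`. -/
def cont {A : Type*} [CommRing A] : List A → A
  | [] => 1
  | [a] => a
  | a :: b :: l => a * cont (b :: l) - cont l

lemma mProd_nil {A : Type*} [CommRing A] : mProd ([] : List A) = 1 := rfl

lemma mProd_append {A : Type*} [CommRing A] (l m : List A) :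
    mProd (l ++ m) = mProd m * mProd l := by
  simp [mProd, List.prod_append]

lemma mProd_cons {A : Type*} [CommRing A] (a : A) (l : List A) :
    mProd (a :: l) = mProd l * mMat a := by
  simp [mProd]

lemma mProd_singleton {A : Type*} [CommRing A] (a : A) : mProd [a] = mMat a := by
  simp [mProd]

-- rotation invariance
lemma mProd_rotate_pm (l : List ℤ) (h : mProd l = 1 ∨ mProd l = -1) (k : ℕ) :
    mProd (l.rotate k) = 1 ∨ mProd (l.rotate k) = -1 := by
  induction k generalizing l with
  | zero => simpa using h
  | succ n ih =>
      have : l.rotate (n+1) = (l.rotate 1).rotate n := by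
        rw [List.rotate_rotate, Nat.add_comm]
      rw [this]
      apply ih
      rcases l with _ | ⟨a, t⟩
      · simpa using h
      · rw [List.rotate_cons_succ, List.rotate_zero, mProd_append, mProd_singleton]
        rw [mProd_cons] at h
        have hinv : mMat a * !![0,1;-1,a] = 1 ∧ !![0,1;-1,a] * mMat a = 1 := by
          constructor
          · rw [mMat, Matrix.mul_fin_two, Matrix.one_fin_two]; norm_num
          · rw [mMat, Matrix.mul_fin_two, Matrix.one_fin_two]; norm_num
        rcases h with h | h
        · left
          have : mProd t = !![0,1;-1,a] := by
            calc mProd t = mProd t * (mMat a * !![0,1;-1,a]) := by rw [hinv.1, mul_one]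
            _ = (mProd t * mMat a) * !![0,1;-1,a] := by rw [mul_assoc]
            _ = !![0,1;-1,a] := by rw [h, one_mul]
          rw [this, hinv.1]
        · right
          have : mProd t = -!![0,1;-1,a] := by
            calc mProd t = mProd t * (mMat a * !![0,1;-1,a]) := by rw [hinv.1, mul_one]
            _ = (mProd t * mMat a) * !![0,1;-1,a] := by rw [mul_assoc]
            _ = -!![0,1;-1,a] := by rw [h]; simp
          rw [this, mul_neg, hinv.1]

-- contraction
lemma mProd_contract (x y : ℤ) (d : List ℤ) :
    mProd (x :: 0 :: y :: d) = - mProd ((x+y) :: d) := by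
  rw [mProd_cons, mProd_cons, mProd_cons, mProd_cons]
  have : mMat y * mMat 0 * mMat x = - mMat (x+y) := by
    rw [mMat, mMat, mMat, mMat, Matrix.mul_fin_two, Matrix.mul_fin_two]
    norm_num
    ring
  rw [mul_assoc, mul_assoc, ← mul_assoc (mMat y), this]
  simp

-- growth lemma

lemma mProd_grow (l : List ℤ) (h2 : ∀ x ∈ l, 2 ≤ x) (hne : l ≠ []) :
    1 ≤ mProd l 1 0 ∧ mProd l 1 1 ≤ 0 ∧ 1 ≤ mProd l 1 0 + mProd l 1 1 := by
  induction l with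
  | nil => exact absurd rfl hne
  | cons a t ih =>
      rcases eq_or_ne t [] with rfl | hte
      · rw [mProd_singleton, mMat]; norm_num
      · have ht := ih (fun x hx => h2 x (List.mem_cons_of_mem _ hx)) hte
        have ha : 2 ≤ a := h2 a List.mem_cons_self
        rw [mProd_cons]
        have e0 : (mProd t * mMat a) 1 0 = mProd t 1 0 * a + mProd t 1 1 := by
          rw [Matrix.mul_apply, Fin.sum_univ_two, mMat]; simp
        have e1 : (mProd t * mMat a) 1 1 = - mProd t 1 0 := by
          rw [Matrix.mul_apply, Fin.sum_univ_two, mMat]; simp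
        rw [e0, e1]
        refine ⟨?_, by linarith [ht.1], ?_⟩ <;> nlinarith [ht.1, ht.2.1, ht.2.2]

-- length 1 and 2 quiddities
lemma no_len1 (a : ℤ) : ¬ (mProd [a] = 1 ∨ mProd [a] = -1) := by
  rintro (h | h) <;> · have := congrFun (congrFun h 1) 0; simp [mProd_singleton, mMat] at this
lemma len2_zero (a b : ℤ) (h : mProd [a,b] = 1 ∨ mProd [a,b] = -1) : a = 0 ∧ b = 0 := by
  have hm : mProd [a,b] = !![a*b-1, -b; a, -1] := by
    rw [mProd_cons, mProd_singleton, mMat, mMat, Matrix.mul_fin_two]; ring_nf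
  rcases h with h | h
  · rw [hm, Matrix.one_fin_two] at h
    have := congrFun (congrFun h 1) 1; simp at this
  · rw [hm] at h
    have h10 := congrFun (congrFun h 1) 0
    have h01 := congrFun (congrFun h 0) 1
    simp [Matrix.one_fin_two] at h10 h01
    exact ⟨h10, by linarith⟩

-- rotation structure
lemma rot_split {α : Type*} (l : List α) (k : ℕ) (hl : l ≠ []) :
    ∃ p q : List α, l = p ++ q ∧ l.rotate k = q ++ p := by
  have hk : k % l.length < l.length := Nat.mod_lt _ (List.length_pos_iff.2 hl)
  refine ⟨l.take (k % l.length), l.drop (k % l.length), (List.take_append_drop _ _).symm, ?_⟩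
  rw [← List.rotate_mod, List.rotate_eq_drop_append_take hk.le]

lemma rot_app {α : Type*} (p q : List α) : (p ++ q).rotate p.length = q ++ p := by
  rw [List.rotate_eq_drop_append_take (by simp), List.drop_left, List.take_left]

def ZZp (c : List ℤ) : Prop := ∃ k t, c.rotate k = 0::0::t
def OOp (c : List ℤ) : Prop := ∃ k x y t, c.rotate k = x::1::y::t ∧ 1 ≤ x ∧ 1 ≤ y

lemma ZZp_rot {c : List ℤ} (m : ℕ) (h : ZZp (c.rotate m)) : ZZp c := by
  obtain ⟨k, t, hk⟩ := h
  exact ⟨m + k, t, by rw [← List.rotate_rotate]; exact hk⟩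

lemma OOp_rot {c : List ℤ} (m : ℕ) (h : OOp (c.rotate m)) : OOp c := by
  obtain ⟨k, x, y, t, hk, hx, hy⟩ := h
  exact ⟨m + k, x, y, t, by rw [← List.rotate_rotate]; exact hk, hx, hy⟩

lemma structural_aux (n : ℕ) : ∀ c : List ℤ, c.length ≤ n → (∀ x ∈ c, 0 ≤ x) →
    (mProd c = 1 ∨ mProd c = -1) → 3 ≤ c.length → ZZp c ∨ OOp c := by
  induction n with
  | zero => intro c hl _ _ h3; omega
  | succ n ih =>
    intro c hl h0 hq h3
    by_cases hz : (0:ℤ) ∈ c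
    · -- there is a zero
      obtain ⟨p, q, rfl⟩ := List.append_of_mem hz
      set r : List ℤ := q ++ p with hr
      have h1 : (p ++ 0 :: q).rotate p.length = 0 :: r := by
        have := rot_app p (0 :: q); simpa [hr] using this
      have hrlen : 2 ≤ r.length := by
        simp only [hr, List.length_append] at *
        simp at h3; omega
      rcases r with _ | ⟨y, r1⟩
      · simp at hrlen
      rcases eq_or_ne y 0 with rfl | hy0
      · exact Or.inl ⟨p.length, r1, h1⟩
      have hr1ne : r1 ≠ [] := by
        intro h; rw [h] at hrlen; simp at hrlen
      set D : List ℤ := r1.dropLast with hD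
      set x : ℤ := r1.getLast hr1ne with hx
      have hr1 : r1 = D ++ [x] := by
        rw [hD, hx]; exact (List.dropLast_append_getLast hr1ne).symm
      have h2 : (0 :: y :: r1).rotate (D.length + 2) = x :: 0 :: y :: D := by
        have := rot_app (0 :: y :: D) [x]
        simp only [List.length_cons] at this
        rw [hr1]
        convert this using 2 <;> simp <;> omega
      have hfC : (p ++ 0 :: q).rotate (p.length + (D.length + 2)) = x :: 0 :: y :: D := by
        rw [← List.rotate_rotate, h1, h2]
      have hmemf : ∀ z ∈ (x :: 0 :: y :: D), z ∈ (p ++ 0 :: q) := by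
        intro z hzf
        rw [← hfC] at hzf
        exact (List.mem_rotate).1 hzf
      rcases eq_or_ne x 0 with hx0 | hx0
      · rw [hx0] at hfC
        exact Or.inl ⟨_, y :: D, hfC⟩
      have hxpos : 1 ≤ x := by have := h0 x (hmemf x (by simp)); omega
      have hypos : 1 ≤ y := by have := h0 y (hmemf y (by simp)); omega
      have hqf : mProd (x :: 0 :: y :: D) = 1 ∨ mProd (x :: 0 :: y :: D) = -1 := by
        rw [← hfC]; exact mProd_rotate_pm _ hq _
      have hqc' : mProd ((x+y) :: D) = 1 ∨ mProd ((x+y) :: D) = -1 := by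
        rw [mProd_contract] at hqf
        rcases hqf with h | h
        · exact Or.inr (neg_eq_iff_eq_neg.mp h)
        · exact Or.inl (neg_inj.mp h)
      have hlc : (p ++ 0 :: q).length = D.length + 3 := by
        have := congrArg List.length hfC
        simp only [List.length_rotate] at this
        simp at this ⊢; omega
      rcases D with _ | ⟨d0, D1⟩
      · exact absurd hqc' (no_len1 _)
      rcases D1 with _ | ⟨d1, D2⟩
      · have := len2_zero _ _ hqc'; omega
      -- now D.length ≥ 2, apply IH to (x+y) :: D
      set D : List ℤ := d0 :: d1 :: D2 with hDdef
      have hc'len : ((x+y) :: D).length ≤ n := by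
        simp only [List.length_cons] at hlc ⊢
        simp at hlc hl ⊢; omega
      have hc'0 : ∀ z ∈ (x+y) :: D, 0 ≤ z := by
        intro z hzc
        rcases List.mem_cons.1 hzc with rfl | hzD
        · omega
        · exact h0 z (hmemf z (by simp [hzD]))
      have h3' : 3 ≤ ((x+y) :: D).length := by simp [hDdef]
      rcases ih _ hc'len hc'0 hqc' h3' with hZZ | hOO
      · -- pull back adjacent zeros
        obtain ⟨j, s, hj⟩ := hZZ
        obtain ⟨P, Q, hPQ, hrot⟩ := rot_split ((x+y) :: D) j (by simp)
        rw [hj] at hrot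
        rcases Q with _ | ⟨q0, Q0⟩
        · simp only [List.nil_append] at hrot
          rw [← hrot, List.append_nil] at hPQ
          injection hPQ with h' _; omega
        rw [List.cons_append] at hrot
        injection hrot with hq0 hrot
        subst hq0
        rcases Q0 with _ | ⟨q1, Q1⟩
        · simp only [List.nil_append] at hrot
          rw [← hrot, List.cons_append] at hPQ
          injection hPQ with h' _; omega
        rw [List.cons_append] at hrot
        injection hrot with hq1 hrot
        subst hq1
        rcases P with _ | ⟨p0, P1⟩
        · simp only [List.nil_append] at hPQ
          injection hPQ with h' _; omega
        rw [List.cons_append] at hPQ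
        injection hPQ with hp0 hDe
        refine Or.inl (ZZp_rot (p.length + (D.length + 2)) ?_)
        rw [hfC, hDe]
        refine ⟨P1.length + 3, Q1 ++ (x :: 0 :: y :: P1), ?_⟩
        have h := rot_app (x :: 0 :: y :: P1) (0 :: 0 :: Q1)
        simpa using h
      · -- pull back 1-pattern
        obtain ⟨j, u, v, s, hj, hu, hv⟩ := hOO
        obtain ⟨P, Q, hPQ, hrot⟩ := rot_split ((x+y) :: D) j (by simp)
        rw [hj] at hrot
        rcases Q with _ | ⟨u0, Q0⟩
        · simp only [List.nil_append] at hrot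
          rw [← hrot, List.append_nil] at hPQ
          injection hPQ with hxy hDe
          refine Or.inr (OOp_rot (p.length + (D.length + 2)) ?_)
          rw [hfC, hDe]
          refine ⟨2, y, v, s ++ [x, 0], ?_, hypos, hv⟩
          have h := rot_app [x, 0] (y :: 1 :: v :: s)
          simpa using h
        rw [List.cons_append] at hrot
        injection hrot with hu0 hrot
        subst hu0
        rcases Q0 with _ | ⟨u1, Q1⟩
        · simp only [List.nil_append] at hrot
          rw [← hrot, List.cons_append] at hPQ
          injection hPQ with h' _; omega
        rw [List.cons_append] at hrot
        injection hrot with hu1 hrot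
        subst hu1
        rcases Q1 with _ | ⟨u2, Q2⟩
        · -- Q = [u, 1]
          simp only [List.nil_append] at hrot
          rw [← hrot, List.cons_append] at hPQ
          injection hPQ with hxy hDe
          refine Or.inr (OOp_rot (p.length + (D.length + 2)) ?_)
          rw [hfC, hDe]
          refine ⟨s.length + 3, u, x, 0 :: y :: s, ?_, hu, hxpos⟩
          have h := rot_app (x :: 0 :: y :: s) [u, 1]
          simpa using h
        rw [List.cons_append] at hrot
        injection hrot with hu2 hrot
        subst hu2
        rcases P with _ | ⟨p0, P1⟩
        · simp only [List.nil_append] at hPQ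
          injection hPQ with hxy hDe
          refine Or.inr (OOp_rot (p.length + (D.length + 2)) ?_)
          rw [hfC, hDe]
          refine ⟨2, y, v, Q2 ++ [x, 0], ?_, hypos, hv⟩
          have h := rot_app [x, 0] (y :: 1 :: v :: Q2)
          simpa using h
        rw [List.cons_append] at hPQ
        injection hPQ with hp0 hDe
        refine Or.inr (OOp_rot (p.length + (D.length + 2)) ?_)
        rw [hfC, hDe]
        refine ⟨P1.length + 3, u, v, Q2 ++ (x :: 0 :: y :: P1), ?_, hu, hv⟩
        have h := rot_app (x :: 0 :: y :: P1) (u :: 1 :: v :: Q2)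
        simpa using h
    · -- no zero
      by_cases h1 : (1:ℤ) ∈ c
      · obtain ⟨p, q, rfl⟩ := List.append_of_mem h1
        set r : List ℤ := q ++ p with hr
        have he : (p ++ 1 :: q).rotate p.length = 1 :: r := by
          have := rot_app p (1 :: q); simpa [hr] using this
        have hrlen : 2 ≤ r.length := by
          simp only [hr, List.length_append] at *
          simp at h3; omega
        have hrne : r ≠ [] := by intro h; rw [h] at hrlen; simp at hrlen
        set D : List ℤ := r.dropLast with hD
        set x : ℤ := r.getLast hrne with hx
        have hr2 : r = D ++ [x] := by
          rw [hD, hx]; exact (List.dropLast_append_getLast hrne).symm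
        have h2 : (1 :: r).rotate (D.length + 1) = x :: 1 :: D := by
          have := rot_app (1 :: D) [x]
          simp only [List.length_cons] at this
          rw [hr2]
          convert this using 2 <;> simp <;> omega
        have hDlen : 1 ≤ D.length := by
          have := congrArg List.length hr2; simp at this; omega
        rcases D with _ | ⟨y, D'⟩
        · simp at hDlen
        have hfC : (p ++ 1 :: q).rotate (p.length + (List.length (y :: D') + 1)) =
            x :: 1 :: y :: D' := by
          rw [← List.rotate_rotate, he, h2]
        have hmemr : ∀ z ∈ r, z ∈ (p ++ 1 :: q) := by
          intro z hzr
          rw [hr] at hzr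
          rcases List.mem_append.1 hzr with h | h
          · exact List.mem_append.2 (Or.inr (List.mem_cons_of_mem _ h))
          · exact List.mem_append.2 (Or.inl h)
        have hxmem : x ∈ r := List.getLast_mem hrne
        have hymem : y ∈ r := by rw [hr2]; simp
        have hxpos : 1 ≤ x := by
          have h' := h0 x (hmemr x hxmem)
          have : x ≠ 0 := fun h => hz (h ▸ hmemr x hxmem)
          omega
        have hypos : 1 ≤ y := by
          have h' := h0 y (hmemr y hymem)
          have : y ≠ 0 := fun h => hz (h ▸ hmemr y hymem)
          omega
        exact Or.inr ⟨_, x, y, D', hfC, hxpos, hypos⟩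
      · exfalso
        have h2 : ∀ z ∈ c, 2 ≤ z := by
          intro z hzc
          have := h0 z hzc
          have hne0 : z ≠ 0 := fun h => hz (h ▸ hzc)
          have hne1 : z ≠ 1 := fun h => h1 (h ▸ hzc)
          omega
        have hne : c ≠ [] := by intro h; rw [h] at h3; simp at h3
        have hg := mProd_grow c h2 hne
        rcases hq with h | h <;> · rw [h] at hg; simp [Matrix.one_fin_two] at hg

lemma dropLast_cons_concat {α : Type*} (a b : α) (l : List α) :
    (a :: (l ++ [b])).dropLast = a :: l := by
  rw [show a :: (l ++ [b]) = (a :: l) ++ [b] from by simp, List.dropLast_concat]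
lemma getLast?_cons_concat {α : Type*} (a b : α) (l : List α) :
    (a :: (l ++ [b])).getLast? = some b := by
  rw [show a :: (l ++ [b]) = (a :: l) ++ [b] from by simp, List.getLast?_concat]

-- length of oplus
lemma oplus_length (a b : List ℤ) (ha : 2 ≤ a.length) (hb : 2 ≤ b.length) :
    (oplus a b).length = a.length + b.length - 2 := by
  simp [oplus]; omega

-- length 3 classification
lemma len3 (a b d : ℤ) (h0a : 0 ≤ a) (h0b : 0 ≤ b) (h0d : 0 ≤ d)
    (h : mProd [a,b,d] = 1 ∨ mProd [a,b,d] = -1) : a = 1 ∧ b = 1 ∧ d = 1 := by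
  have hm : mProd [a,b,d] = !![(d*b-1)*a-d, 1-d*b; b*a-1, -b] := by
    rw [mProd_cons, mProd_cons, mProd_singleton, mMat, mMat, mMat,
      Matrix.mul_fin_two, Matrix.mul_fin_two]
    ring_nf
  rcases h with h | h
  · rw [hm, Matrix.one_fin_two] at h
    have h11 := congrFun (congrFun h 1) 1
    simp at h11; omega
  · rw [hm] at h
    have h11 := congrFun (congrFun h 1) 1
    have h10 := congrFun (congrFun h 1) 0
    have h01 := congrFun (congrFun h 0) 1
    simp [Matrix.one_fin_two] at h11 h10 h01
    have hb1 : b = 1 := by omega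
    subst hb1
    have ha1 : a = 1 := by omega
    constructor; omega
    constructor; rfl
    nlinarith
-- reducibility from OO pattern
lemma red_OO (c : List ℤ) (h0 : ∀ z ∈ c, 0 ≤ z) (h4 : 4 ≤ c.length) (h : OOp c) :
    IsReducible {x : ℤ | 0 ≤ x} c := by
  obtain ⟨k, x, y, t, hk, hx, hy⟩ := h
  have hmemt : ∀ z ∈ x :: 1 :: y :: t, 0 ≤ z := by
    intro z hz
    exact h0 z (List.mem_rotate.1 (hk ▸ hz))
  have hlen : c.length = t.length + 3 := by
    have := congrArg List.length hk; simpa using this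
  refine ⟨(y-1) :: (t ++ [x-1]), [1,1,1], by simp; omega, by simp, ?_, ?_, ?_⟩
  · intro z hz
    simp at hz
    rcases hz with rfl | hz | rfl
    · simp; omega
    · simp; exact hmemt z (by simp [hz])
    · simp; omega
  · exact ⟨by intro z hz; simp at hz; simp [hz], Or.inr (by decide)⟩
  · left
    refine ⟨k + 2, ?_⟩
    rw [← List.rotate_rotate, hk]
    have h2 : (x :: 1 :: y :: t).rotate 2 = y :: t ++ [x, 1] := by
      have := rot_app [x, 1] (y :: t); simpa using this
    rw [h2]
    simp [oplus, dropLast_cons_concat, getLast?_cons_concat, sub_add_cancel]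
-- reducibility from ZZ pattern, length ≥ 5
lemma red_ZZ (c : List ℤ) (h0 : ∀ z ∈ c, 0 ≤ z) (h5 : 5 ≤ c.length) (h : ZZp c) :
    IsReducible {x : ℤ | 0 ≤ x} c := by
  obtain ⟨k, t, hk⟩ := h
  have hlen : c.length = t.length + 2 := by
    have := congrArg List.length hk; simpa using this
  rcases t with _ | ⟨t0, t1⟩
  · simp at hlen; omega
  have ht1 : t1 ≠ [] := by intro h; rw [h] at hlen; simp at hlen; omega
  refine ⟨t0 :: t1, [0,0,0,0], by simp at hlen ⊢; omega, by simp, ?_, ?_, ?_⟩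
  · intro z hz
    simp
    exact h0 z (List.mem_rotate.1 (hk ▸ (by simp [hz] : z ∈ 0 :: 0 :: t0 :: t1)))
  · exact ⟨by intro z hz; simp at hz; simp [hz], Or.inl (by decide)⟩
  · left
    refine ⟨k + 2, ?_⟩
    rw [← List.rotate_rotate, hk]
    have h2 : (0 :: 0 :: t0 :: t1).rotate 2 = t0 :: t1 ++ [0, 0] := by
      have := rot_app [0, 0] (t0 :: t1); simpa using this
    rw [h2]
    have ht1e : t1 = t1.dropLast ++ [t1.getLast ht1] := (List.dropLast_append_getLast ht1).symm
    conv_lhs => rw [ht1e]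
    conv_rhs => rw [ht1e]
    simp [oplus, dropLast_cons_concat, getLast?_cons_concat]
-- length-4 adjacent zeros gives all zero
lemma ZZ4 (c : List ℤ) (hq : mProd c = 1 ∨ mProd c = -1) (hlen : c.length = 4)
    (hqr : ∀ k, mProd (c.rotate k) = 1 ∨ mProd (c.rotate k) = -1)
    (h : ZZp c) : c = [0,0,0,0] := by
  obtain ⟨k, t, hk⟩ := h
  have hlent : t.length = 2 := by
    have := congrArg List.length hk; simp [hlen] at this; omega
  obtain ⟨u, v, rfl⟩ := List.length_eq_two.1 hlent
  have hq2 := hqr k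
  rw [hk] at hq2
  have hm : mProd ([0, 0, u, v] : List ℤ) = - mProd [u, v] := by
    rw [show ([0, 0, u, v] : List ℤ) = 0 :: 0 :: [u, v] from rfl]
    rw [mProd_cons, mProd_cons, mul_assoc]
    rw [show mMat (0:ℤ) * mMat 0 = -1 from by decide]
    rw [mul_neg_one]
  rw [hm] at hq2
  have huv : mProd [u,v] = 1 ∨ mProd [u,v] = -1 := by
    rcases hq2 with h | h
    · exact Or.inr (neg_eq_iff_eq_neg.mp h)
    · exact Or.inl (neg_inj.mp h)
  obtain ⟨hu, hv⟩ := len2_zero u v huv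
  subst hu; subst hv
  have hz : ∀ z ∈ c, z = 0 := by
    intro z hz
    have hm2 : z ∈ c.rotate k := List.mem_rotate.2 hz
    rw [hk] at hm2
    simpa using hm2
  exact (List.eq_replicate_iff.2 ⟨hlen, hz⟩).trans rfl


/-- The only irreducible λ-quiddities over `ℕ` (the nonnegative integers in `ℤ`) are
`(1,1,1)` and `(0,0,0,0)`. -/
theorem stmt7 (c : List ℤ) :
    IrreducibleQuiddity {x : ℤ | 0 ≤ x} c ↔ c = [1, 1, 1] ∨ c = [0, 0, 0, 0] := by
  constructor
  · rintro ⟨⟨hmem, hq⟩, h3, hirr⟩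
    have h0 : ∀ x ∈ c, 0 ≤ x := hmem
    rcases eq_or_ne c.length 3 with h3' | h3'
    · left
      obtain ⟨a, b, d, rfl⟩ := List.length_eq_three.1 h3'
      obtain ⟨ha, hb, hd⟩ := len3 a b d (h0 a (by simp)) (h0 b (by simp)) (h0 d (by simp)) hq
      rw [ha, hb, hd]
    · have h4 : 4 ≤ c.length := by omega
      rcases structural_aux c.length c le_rfl h0 hq h3 with hZZ | hOO
      · rcases eq_or_ne c.length 4 with h4' | h4'
        · right
          exact ZZ4 c hq h4' (fun k => mProd_rotate_pm c hq k) hZZ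
        · exact absurd (red_ZZ c h0 (by omega) hZZ) hirr
      · exact absurd (red_OO c h0 h4 hOO) hirr
  · rintro (rfl | rfl)
    · refine ⟨⟨by intro x hx; simp at hx; simp [hx], Or.inr (by decide)⟩, by simp, ?_⟩
      rintro ⟨a, b, ha, hb, hmem, hqb, hteq⟩
      have hlen : (oplus a b).length = a.length + b.length - 2 :=
        oplus_length a b (by omega) (by omega)
      rcases hteq with ⟨k, hk⟩ | ⟨k, hk⟩ <;>
      · have := congrArg List.length hk
        simp [hlen] at this
        omega
    · refine ⟨⟨by intro x hx; simp at hx; simp [hx], Or.inl (by decide)⟩, by simp, ?_⟩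
      rintro ⟨a, b, ha, hb, hmem, hqb, hteq⟩
      have hlen : (oplus a b).length = a.length + b.length - 2 :=
        oplus_length a b (by omega) (by omega)
      have hkk : ∃ k, oplus a b = ([0,0,0,0] : List ℤ).rotate k := by
        rcases hteq with ⟨k, hk⟩ | ⟨k, hk⟩
        · exact ⟨k, hk⟩
        · exact ⟨k, by simpa using hk⟩
      obtain ⟨k, hk⟩ := hkk
      have hlen4 : (oplus a b).length = 4 := by
        rw [hk]; simp
      have ha3 : a.length = 3 := by omega
      have hb3 : b.length = 3 := by omega
      obtain ⟨a0, a1, a2, rfl⟩ := List.length_eq_three.1 ha3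
      obtain ⟨b0, b1, b2, rfl⟩ := List.length_eq_three.1 hb3
      have hop : oplus [a0,a1,a2] [b0,b1,b2] = [a0+b2, a1, a2+b0, b1] := by
        simp [oplus]
      have hz : ∀ z ∈ oplus [a0,a1,a2] [b0,b1,b2], z = 0 := by
        intro z hz
        rw [hk] at hz
        have := List.mem_rotate.1 hz
        simpa using this
      rw [hop] at hz
      have e0 : a0 + b2 = 0 := hz _ (by simp)
      have e1 : a1 = 0 := hz _ (by simp)
      have e2 : a2 + b0 = 0 := hz _ (by simp)
      have e3 : b1 = 0 := hz _ (by simp)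
      have hb0 : (0:ℤ) ≤ b0 := hqb.1 b0 (by simp)
      have hb2 : (0:ℤ) ≤ b2 := hqb.1 b2 (by simp)
      have ha0 : (0:ℤ) ≤ a0 := hmem a0 (by simp)
      have ha2 : (0:ℤ) ≤ a2 := hmem a2 (by simp)
      have hb0' : b0 = 0 := by omega
      have hb2' : b2 = 0 := by omega
      rcases hqb.2 with h | h <;>
      · rw [hb0', hb2', e3] at h
        exact absurd h (by decide)
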